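/- For every n, the swap algebra Σ_n (dim V = 2) is spanned by the operators induced by permutations all of whose cycles have length at most 3. -/
import Mathlib

/-- The operator on `V^⊗n` (here realized as `(Fin n → Fin d) → ℂ`, `dim V = d`)
induced by a permutation `σ ∈ Sₙ` permuting the tensor factors. -/
def permOp (d n : ℕ) (σ : Equiv.Perm (Fin n)) :
    Module.End ℂ ((Fin n → Fin d) → ℂ) where
  toFun f := fun x => f (x ∘ σ)
  map_add' _ _ := rfl
  map_smul' _ _ := rfl

namespace SwapAux

open Equiv Equiv.Perm

variable {n : ℕ}

/-- The 3-cycle `a → b → c → a`. -/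
def c3 (a b c : Fin n) : Equiv.Perm (Fin n) := Equiv.swap a b * Equiv.swap b c

lemma c3_apply {a b c : Fin n} (hab : a ≠ b) (hac : a ≠ c) (hbc : b ≠ c) (v : Fin n) :
    c3 a b c v = if v = a then b else if v = b then c else if v = c then a else v := by
  simp only [c3, Equiv.Perm.mul_apply, Equiv.swap_apply_def]
  split_ifs <;> simp_all

set_option maxHeartbeats 2000000 in
lemma c3_id {a b c d : Fin n} (hab : a ≠ b) (hac : a ≠ c) (had : a ≠ d)
    (hbc : b ≠ c) (hbd : b ≠ d) (hcd : c ≠ d) :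
    c3 a d b * (c3 a c d * c3 a b c) = 1 := by
  apply Equiv.ext; intro v
  simp only [Equiv.Perm.mul_apply, Equiv.Perm.one_apply,
    c3_apply hab hac hbc, c3_apply hac had hcd, c3_apply had hab hbd.symm]
  split_ifs <;> simp_all

def bad (σ : Equiv.Perm (Fin n)) (x : Fin n) : Prop :=
  σ x ≠ x ∧ σ (σ x) ≠ x ∧ σ (σ (σ x)) ≠ x

instance (σ : Equiv.Perm (Fin n)) : DecidablePred (bad σ) := fun x => by
  unfold bad; infer_instance

def g (σ : Equiv.Perm (Fin n)) : ℕ := (Finset.univ.filter (bad σ)).card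

lemma key_pointwise (a b c : Fin n) (hab : a ≠ b) (hac : a ≠ c) (hbc : b ≠ c)
    (F : (Fin n → Fin 2) → ℂ) (x : Fin n → Fin 2) :
    F x + F (x ∘ c3 a b c) + F (x ∘ c3 a c b) =
      F (x ∘ Equiv.swap a b) + F (x ∘ Equiv.swap a c) + F (x ∘ Equiv.swap b c) := by
  have tri : x a = x b ∨ x a = x c ∨ x b = x c := by
    have h : ∀ u v w : Fin 2, u = v ∨ u = w ∨ v = w := by decide
    exact h _ _ _
  rcases tri with h | h | h
  · have e1 : x ∘ ⇑(Equiv.swap a b) = x := by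
      funext v
      simp only [Function.comp_apply, Equiv.swap_apply_def]
      split_ifs <;> simp_all
    have e2 : x ∘ ⇑(c3 a b c) = x ∘ ⇑(Equiv.swap b c) := by
      funext v
      simp only [Function.comp_apply, c3, Equiv.Perm.mul_apply, Equiv.swap_apply_def]
      split_ifs <;> simp_all
    have e3 : x ∘ ⇑(c3 a c b) = x ∘ ⇑(Equiv.swap a c) := by
      funext v
      simp only [Function.comp_apply, c3, Equiv.Perm.mul_apply, Equiv.swap_apply_def]
      split_ifs <;> simp_all
    rw [e1, e2, e3]; ring
  · have e1 : x ∘ ⇑(Equiv.swap a c) = x := by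
      funext v
      simp only [Function.comp_apply, Equiv.swap_apply_def]
      split_ifs <;> simp_all
    have e2 : x ∘ ⇑(c3 a b c) = x ∘ ⇑(Equiv.swap a b) := by
      funext v
      simp only [Function.comp_apply, c3, Equiv.Perm.mul_apply, Equiv.swap_apply_def]
      split_ifs <;> simp_all
    have e3 : x ∘ ⇑(c3 a c b) = x ∘ ⇑(Equiv.swap b c) := by
      funext v
      simp only [Function.comp_apply, c3, Equiv.Perm.mul_apply, Equiv.swap_apply_def]
      split_ifs <;> simp_all
    rw [e1, e2, e3]; ring
  · have e1 : x ∘ ⇑(Equiv.swap b c) = x := by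
      funext v
      simp only [Function.comp_apply, Equiv.swap_apply_def]
      split_ifs <;> simp_all
    have e2 : x ∘ ⇑(c3 a b c) = x ∘ ⇑(Equiv.swap a c) := by
      funext v
      simp only [Function.comp_apply, c3, Equiv.Perm.mul_apply, Equiv.swap_apply_def]
      split_ifs <;> simp_all
    have e3 : x ∘ ⇑(c3 a c b) = x ∘ ⇑(Equiv.swap a b) := by
      funext v
      simp only [Function.comp_apply, c3, Equiv.Perm.mul_apply, Equiv.swap_apply_def]
      split_ifs <;> simp_all
    rw [e1, e2, e3]; ring

lemma rel (a b c : Fin n) (hab : a ≠ b) (hac : a ≠ c) (hbc : b ≠ c) (ρ : Equiv.Perm (Fin n)) :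
    permOp 2 n ρ + permOp 2 n (c3 a b c * ρ) + permOp 2 n (c3 a c b * ρ) =
      permOp 2 n (Equiv.swap a b * ρ) + permOp 2 n (Equiv.swap a c * ρ) +
        permOp 2 n (Equiv.swap b c * ρ) := by
  apply LinearMap.ext; intro f
  funext x
  exact key_pointwise a b c hab hac hbc (fun z => f (z ∘ ⇑ρ)) x

lemma pow_fix_iff {σ : Equiv.Perm (Fin n)} {a x : Fin n} (h : σ.SameCycle a x) (j : ℕ) :
    (σ ^ j) x = x ↔ (σ ^ j) a = a := by
  obtain ⟨i, hi⟩ := h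
  subst hi
  have hcomm : (σ ^ (j : ℤ)) * σ ^ i = σ ^ i * σ ^ (j : ℤ) := by
    rw [← zpow_add, ← zpow_add, add_comm]
  have hc : (σ ^ j) ((σ ^ i) a) = (σ ^ i) ((σ ^ j) a) := by
    calc (σ ^ j) ((σ ^ i) a) = ((σ ^ (j : ℤ)) * σ ^ i) a := by
          rw [Equiv.Perm.mul_apply, zpow_natCast]
      _ = (σ ^ i * σ ^ (j : ℤ)) a := by rw [hcomm]
      _ = (σ ^ i) ((σ ^ j) a) := by rw [Equiv.Perm.mul_apply, zpow_natCast]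
  rw [hc]
  exact Equiv.apply_eq_iff_eq _

lemma bad_pow {σ : Equiv.Perm (Fin n)} {x : Fin n} :
    bad σ x ↔ ((σ ^ 1) x ≠ x ∧ (σ ^ 2) x ≠ x ∧ (σ ^ 3) x ≠ x) := by
  simp [bad, pow_succ, Equiv.Perm.mul_apply]

lemma bad_congr {σ : Equiv.Perm (Fin n)} {a x : Fin n} (h : σ.SameCycle a x) :
    bad σ x ↔ bad σ a := by
  simp only [bad_pow, ne_eq, pow_fix_iff h]

lemma g_lt {σ τ : Equiv.Perm (Fin n)} {a : Fin n} (ha : bad σ a)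
    (hout : ∀ x, ¬ σ.SameCycle a x → τ x = σ x)
    (p : Fin n) (hp : σ.SameCycle a p)
    (hfix : τ p = p ∨ τ (τ p) = p ∨ τ (τ (τ p)) = p) :
    g τ < g σ := by
  classical
  set C : Finset (Fin n) := Finset.univ.filter (fun x => σ.SameCycle a x) with hC
  have hmemC : ∀ x, x ∈ C ↔ σ.SameCycle a x := by intro x; simp [hC]
  have houtC : ∀ x, x ∉ C → τ x = σ x ∧ σ x ∉ C := by
    intro x hx
    rw [hmemC] at hx
    have h2 : ¬ σ.SameCycle a (σ x) := fun h => hx (Equiv.Perm.sameCycle_apply_right.mp h)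
    exact ⟨hout x hx, by rw [hmemC]; exact h2⟩
  have hbadout : ∀ x, x ∉ C → (bad τ x ↔ bad σ x) := by
    intro x hx
    obtain ⟨e1, hx1⟩ := houtC x hx
    obtain ⟨e2, hx2⟩ := houtC _ hx1
    obtain ⟨e3, -⟩ := houtC _ hx2
    unfold bad
    rw [e1, e2, e3]
  have hpC : p ∈ C := (hmemC p).mpr hp
  have hpnotbad : p ∉ Finset.univ.filter (bad τ) := by
    simp only [Finset.mem_filter, Finset.mem_univ, true_and]
    rcases hfix with h | h | h
    · exact fun hb => hb.1 h
    · exact fun hb => hb.2.1 h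
    · exact fun hb => hb.2.2 h
  have hsub : Finset.univ.filter (bad τ) ⊆ (C.erase p) ∪ ((Finset.univ.filter (bad σ)) \ C) := by
    intro x hx
    by_cases hxC : x ∈ C
    · exact Finset.mem_union_left _ (Finset.mem_erase.mpr ⟨fun h => hpnotbad (h ▸ hx), hxC⟩)
    · refine Finset.mem_union_right _ (Finset.mem_sdiff.mpr ⟨?_, hxC⟩)
      simp only [Finset.mem_filter, Finset.mem_univ, true_and] at hx ⊢
      exact (hbadout x hxC).mp hx
  have hCsub : C ⊆ Finset.univ.filter (bad σ) := by
    intro x hx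
    simp only [Finset.mem_filter, Finset.mem_univ, true_and]
    exact (bad_congr ((hmemC x).mp hx)).mpr ha
  have h1 : g τ ≤ (C.erase p).card + ((Finset.univ.filter (bad σ)) \ C).card :=
    le_trans (Finset.card_le_card hsub) (Finset.card_union_le _ _)
  have h2 : ((Finset.univ.filter (bad σ)) \ C).card + C.card = g σ :=
    Finset.card_sdiff_add_card_eq_card hCsub
  have h3 : (C.erase p).card = C.card - 1 := Finset.card_erase_of_mem hpC
  have h4 : 1 ≤ C.card := Finset.card_pos.mpr ⟨p, hpC⟩
  unfold g at *
  omega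

lemma short_of_no_bad {σ : Equiv.Perm (Fin n)} (h : ∀ x, ¬ bad σ x) :
    ∀ i ∈ σ.cycleType, i ≤ 3 := by
  intro i hi
  rw [Equiv.Perm.cycleType_def, Multiset.mem_map] at hi
  obtain ⟨c, hc, rfl⟩ := hi
  rw [Finset.mem_val] at hc
  obtain ⟨hcy, hsup⟩ := Equiv.Perm.mem_cycleFactorsFinset_iff.mp hc
  obtain ⟨x, hx1, -⟩ := id hcy
  have hxs : x ∈ c.support := Equiv.Perm.mem_support.mpr hx1
  have h1 : c x = σ x := hsup x hxs
  have hxs2 : c x ∈ c.support := Equiv.Perm.apply_mem_support.mpr hxs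
  have h2 : c (c x) = σ (σ x) := by rw [hsup _ hxs2, h1]
  have hxs3 : c (c x) ∈ c.support := Equiv.Perm.apply_mem_support.mpr hxs2
  have h3 : c (c (c x)) = σ (σ (σ x)) := by rw [hsup _ hxs3, h2]
  have hfix : σ x = x ∨ σ (σ x) = x ∨ σ (σ (σ x)) = x := by
    by_contra hcon
    push_neg at hcon
    exact h x ⟨hcon.1, hcon.2.1, hcon.2.2⟩
  have key : ∃ j : ℕ, 1 ≤ j ∧ j ≤ 3 ∧ (c ^ j) x = x := by
    rcases hfix with h' | h' | h'
    · exact ⟨1, le_refl _, by norm_num, by simpa [h1] using h'⟩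
    · refine ⟨2, by norm_num, by norm_num, ?_⟩
      simp only [pow_succ, pow_zero, one_mul, Equiv.Perm.mul_apply]
      rw [h2]; exact h'
    · refine ⟨3, by norm_num, by norm_num, ?_⟩
      simp only [pow_succ, pow_zero, one_mul, Equiv.Perm.mul_apply]
      rw [h3]; exact h'
  obtain ⟨j, hj1, hj3, hjx⟩ := key
  have hpow : c ^ j = 1 := (Equiv.Perm.IsCycle.pow_eq_one_iff hcy).mpr ⟨x, hx1, hjx⟩
  have hdvd := orderOf_dvd_of_pow_eq_one hpow
  rw [Equiv.Perm.IsCycle.orderOf hcy] at hdvd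
  have := Nat.le_of_dvd (by omega) hdvd
  simpa using le_trans this hj3

set_option maxHeartbeats 4000000 in
lemma mem_of_bad {σ : Equiv.Perm (Fin n)} {a : Fin n} (ha : bad σ a) :
    permOp 2 n σ ∈ Submodule.span ℂ
      {f : Module.End ℂ ((Fin n → Fin 2) → ℂ) | ∃ τ, g τ < g σ ∧ f = permOp 2 n τ} := by
  obtain ⟨h1, h2, h3⟩ := id ha
  set b := σ a with hb
  set c := σ b with hc
  set d := σ c with hd
  have hba : b ≠ a := h1
  have hca : c ≠ a := h2
  have hda : d ≠ a := h3
  have hcb : c ≠ b := fun h => hba (σ.injective (by rw [← hc, ← hb]; exact h))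
  have hdb : d ≠ b := fun h => hca (σ.injective (by rw [← hd, ← hb]; exact h))
  have hdc : d ≠ c := fun h => hcb (σ.injective (by rw [← hd, ← hc]; exact h))
  have hab := hba.symm; have hac := hca.symm; have had := hda.symm
  have hbc := hcb.symm; have hbd := hdb.symm; have hcd := hdc.symm
  have sa : σ.SameCycle a a := ⟨0, by simp⟩
  have sb : σ.SameCycle a b := by rw [hb]; exact Equiv.Perm.sameCycle_apply_right.mpr sa
  have sc : σ.SameCycle a c := by rw [hc]; exact Equiv.Perm.sameCycle_apply_right.mpr sb
  have sd : σ.SameCycle a d := by rw [hd]; exact Equiv.Perm.sameCycle_apply_right.mpr sc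
  have hσne : ∀ x, ¬ σ.SameCycle a x → σ x ≠ a ∧ σ x ≠ b ∧ σ x ≠ c ∧ σ x ≠ d := by
    intro x hx
    have hx' : ¬ σ.SameCycle a (σ x) := fun h => hx (Equiv.Perm.sameCycle_apply_right.mp h)
    refine ⟨fun h => hx' ?_, fun h => hx' ?_, fun h => hx' ?_, fun h => hx' ?_⟩
    · rw [h]
    · rw [h]; exact sb
    · rw [h]; exact sc
    · rw [h]; exact sd
  have e1 := rel a b c hab hac hbc σ
  have e2 := rel a c d hac had hcd (c3 a b c * σ)
  have e3 := rel a d b had hab hdb (c3 a c d * (c3 a b c * σ))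
  have hgrp : c3 a d b * (c3 a c d * (c3 a b c * σ)) = σ := by
    calc c3 a d b * (c3 a c d * (c3 a b c * σ))
        = c3 a d b * (c3 a c d * c3 a b c) * σ := by rw [mul_assoc, mul_assoc]
      _ = σ := by rw [c3_id hab hac had hbc hbd hcd, one_mul]
  rw [hgrp] at e3
  have key : permOp 2 n σ + permOp 2 n σ =
      ((permOp 2 n (Equiv.swap a b * σ) + permOp 2 n (Equiv.swap a c * σ) +
          permOp 2 n (Equiv.swap b c * σ))
        - (permOp 2 n (Equiv.swap a c * (c3 a b c * σ)) +
            permOp 2 n (Equiv.swap a d * (c3 a b c * σ)) +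
            permOp 2 n (Equiv.swap c d * (c3 a b c * σ)))
        + (permOp 2 n (Equiv.swap a d * (c3 a c d * (c3 a b c * σ))) +
            permOp 2 n (Equiv.swap a b * (c3 a c d * (c3 a b c * σ))) +
            permOp 2 n (Equiv.swap d b * (c3 a c d * (c3 a b c * σ)))))
        - permOp 2 n (c3 a c b * σ)
        + permOp 2 n (c3 a d c * (c3 a b c * σ))
        - permOp 2 n (c3 a b d * (c3 a c d * (c3 a b c * σ))) := by
    rw [← e1, ← e2, ← e3]; abel
  have mem1 : ∀ τ : Equiv.Perm (Fin n), g τ < g σ → permOp 2 n τ ∈ Submodule.span ℂ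
      {f : Module.End ℂ ((Fin n → Fin 2) → ℂ) | ∃ τ', g τ' < g σ ∧ f = permOp 2 n τ'} :=
    fun τ hτ => Submodule.subset_span ⟨τ, hτ, rfl⟩
  have houtgen : ∀ τ : Equiv.Perm (Fin n),
      (∀ x, σ x ≠ a → σ x ≠ b → σ x ≠ c → σ x ≠ d → τ x = σ x) →
      ∀ x, ¬ σ.SameCycle a x → τ x = σ x := by
    intro τ hτ x hx
    obtain ⟨n1, n2, n3, n4⟩ := hσne x hx
    exact hτ x n1 n2 n3 n4
  have m1 : permOp 2 n (c3 a c b * σ) ∈ Submodule.span ℂ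
      {f : Module.End ℂ ((Fin n → Fin 2) → ℂ) | ∃ τ', g τ' < g σ ∧ f = permOp 2 n τ'} := by
    refine mem1 _ (g_lt ha (houtgen _ ?_) a sa (Or.inl ?_))
    · intro x n1 n2 n3 n4
      simp [Equiv.Perm.mul_apply, c3_apply hac hab hcb, n1, n2, n3, n4]
    · simp [Equiv.Perm.mul_apply, c3_apply hac hab hcb, ← hb,
        hba, hca, hda, hcb, hdb, hdc, hab, hac, had, hbc, hbd, hcd]
  have m2 : permOp 2 n (c3 a d c * (c3 a b c * σ)) ∈ Submodule.span ℂ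
      {f : Module.End ℂ ((Fin n → Fin 2) → ℂ) | ∃ τ', g τ' < g σ ∧ f = permOp 2 n τ'} := by
    refine mem1 _ (g_lt ha (houtgen _ ?_) a sa (Or.inl ?_))
    · intro x n1 n2 n3 n4
      simp [Equiv.Perm.mul_apply, c3_apply hab hac hbc, c3_apply hac had hcd, c3_apply hac hab hcb, c3_apply had hac hdc, c3_apply hab had hbd, Equiv.swap_apply_def, n1, n2, n3, n4]
    · simp [Equiv.Perm.mul_apply, c3_apply hab hac hbc, c3_apply hac had hcd, c3_apply hac hab hcb, c3_apply had hac hdc, c3_apply hab had hbd, ← hb, ← hc, ← hd, Equiv.swap_apply_def, hba, hca, hda, hcb, hdb, hdc, hab, hac, had, hbc, hbd, hcd]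
  have m3 : permOp 2 n (c3 a b d * (c3 a c d * (c3 a b c * σ))) ∈ Submodule.span ℂ
      {f : Module.End ℂ ((Fin n → Fin 2) → ℂ) | ∃ τ', g τ' < g σ ∧ f = permOp 2 n τ'} := by
    refine mem1 _ (g_lt ha (houtgen _ ?_) a sa (Or.inl ?_))
    · intro x n1 n2 n3 n4
      simp [Equiv.Perm.mul_apply, c3_apply hab hac hbc, c3_apply hac had hcd, c3_apply hac hab hcb, c3_apply had hac hdc, c3_apply hab had hbd, Equiv.swap_apply_def, n1, n2, n3, n4]
    · simp [Equiv.Perm.mul_apply, c3_apply hab hac hbc, c3_apply hac had hcd, c3_apply hac hab hcb, c3_apply had hac hdc, c3_apply hab had hbd, ← hb, ← hc, ← hd, Equiv.swap_apply_def, hba, hca, hda, hcb, hdb, hdc, hab, hac, had, hbc, hbd, hcd]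
  have m4 : permOp 2 n (Equiv.swap a b * σ) ∈ Submodule.span ℂ
      {f : Module.End ℂ ((Fin n → Fin 2) → ℂ) | ∃ τ', g τ' < g σ ∧ f = permOp 2 n τ'} := by
    refine mem1 _ (g_lt ha (houtgen _ ?_) a sa (Or.inl ?_))
    · intro x n1 n2 n3 n4
      simp [Equiv.Perm.mul_apply, c3_apply hab hac hbc, c3_apply hac had hcd, c3_apply hac hab hcb, c3_apply had hac hdc, c3_apply hab had hbd, Equiv.swap_apply_def, n1, n2, n3, n4]
    · simp [Equiv.Perm.mul_apply, c3_apply hab hac hbc, c3_apply hac had hcd, c3_apply hac hab hcb, c3_apply had hac hdc, c3_apply hab had hbd, ← hb, ← hc, ← hd, Equiv.swap_apply_def, hba, hca, hda, hcb, hdb, hdc, hab, hac, had, hbc, hbd, hcd]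
  have m5 : permOp 2 n (Equiv.swap a c * σ) ∈ Submodule.span ℂ
      {f : Module.End ℂ ((Fin n → Fin 2) → ℂ) | ∃ τ', g τ' < g σ ∧ f = permOp 2 n τ'} := by
    refine mem1 _ (g_lt ha (houtgen _ ?_) a sa (Or.inr (Or.inl ?_)))
    · intro x n1 n2 n3 n4
      simp [Equiv.Perm.mul_apply, c3_apply hab hac hbc, c3_apply hac had hcd, c3_apply hac hab hcb, c3_apply had hac hdc, c3_apply hab had hbd, Equiv.swap_apply_def, n1, n2, n3, n4]
    · simp [Equiv.Perm.mul_apply, c3_apply hab hac hbc, c3_apply hac had hcd, c3_apply hac hab hcb, c3_apply had hac hdc, c3_apply hab had hbd, ← hb, ← hc, ← hd, Equiv.swap_apply_def, hba, hca, hda, hcb, hdb, hdc, hab, hac, had, hbc, hbd, hcd]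
  have m6 : permOp 2 n (Equiv.swap b c * σ) ∈ Submodule.span ℂ
      {f : Module.End ℂ ((Fin n → Fin 2) → ℂ) | ∃ τ', g τ' < g σ ∧ f = permOp 2 n τ'} := by
    refine mem1 _ (g_lt ha (houtgen _ ?_) b sb (Or.inl ?_))
    · intro x n1 n2 n3 n4
      simp [Equiv.Perm.mul_apply, c3_apply hab hac hbc, c3_apply hac had hcd, c3_apply hac hab hcb, c3_apply had hac hdc, c3_apply hab had hbd, Equiv.swap_apply_def, n1, n2, n3, n4]
    · simp [Equiv.Perm.mul_apply, c3_apply hab hac hbc, c3_apply hac had hcd, c3_apply hac hab hcb, c3_apply had hac hdc, c3_apply hab had hbd, ← hb, ← hc, ← hd, Equiv.swap_apply_def, hba, hca, hda, hcb, hdb, hdc, hab, hac, had, hbc, hbd, hcd]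
  have m7 : permOp 2 n (Equiv.swap a c * (c3 a b c * σ)) ∈ Submodule.span ℂ
      {f : Module.End ℂ ((Fin n → Fin 2) → ℂ) | ∃ τ', g τ' < g σ ∧ f = permOp 2 n τ'} := by
    refine mem1 _ (g_lt ha (houtgen _ ?_) a sa (Or.inl ?_))
    · intro x n1 n2 n3 n4
      simp [Equiv.Perm.mul_apply, c3_apply hab hac hbc, c3_apply hac had hcd, c3_apply hac hab hcb, c3_apply had hac hdc, c3_apply hab had hbd, Equiv.swap_apply_def, n1, n2, n3, n4]
    · simp [Equiv.Perm.mul_apply, c3_apply hab hac hbc, c3_apply hac had hcd, c3_apply hac hab hcb, c3_apply had hac hdc, c3_apply hab had hbd, ← hb, ← hc, ← hd, Equiv.swap_apply_def, hba, hca, hda, hcb, hdb, hdc, hab, hac, had, hbc, hbd, hcd]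
  have m8 : permOp 2 n (Equiv.swap a d * (c3 a b c * σ)) ∈ Submodule.span ℂ
      {f : Module.End ℂ ((Fin n → Fin 2) → ℂ) | ∃ τ', g τ' < g σ ∧ f = permOp 2 n τ'} := by
    refine mem1 _ (g_lt ha (houtgen _ ?_) a sa (Or.inr (Or.inl ?_)))
    · intro x n1 n2 n3 n4
      simp [Equiv.Perm.mul_apply, c3_apply hab hac hbc, c3_apply hac had hcd, c3_apply hac hab hcb, c3_apply had hac hdc, c3_apply hab had hbd, Equiv.swap_apply_def, n1, n2, n3, n4]
    · simp [Equiv.Perm.mul_apply, c3_apply hab hac hbc, c3_apply hac had hcd, c3_apply hac hab hcb, c3_apply had hac hdc, c3_apply hab had hbd, ← hb, ← hc, ← hd, Equiv.swap_apply_def, hba, hca, hda, hcb, hdb, hdc, hab, hac, had, hbc, hbd, hcd]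
  have m9 : permOp 2 n (Equiv.swap c d * (c3 a b c * σ)) ∈ Submodule.span ℂ
      {f : Module.End ℂ ((Fin n → Fin 2) → ℂ) | ∃ τ', g τ' < g σ ∧ f = permOp 2 n τ'} := by
    refine mem1 _ (g_lt ha (houtgen _ ?_) c sc (Or.inl ?_))
    · intro x n1 n2 n3 n4
      simp [Equiv.Perm.mul_apply, c3_apply hab hac hbc, c3_apply hac had hcd, c3_apply hac hab hcb, c3_apply had hac hdc, c3_apply hab had hbd, Equiv.swap_apply_def, n1, n2, n3, n4]
    · simp [Equiv.Perm.mul_apply, c3_apply hab hac hbc, c3_apply hac had hcd, c3_apply hac hab hcb, c3_apply had hac hdc, c3_apply hab had hbd, ← hb, ← hc, ← hd, Equiv.swap_apply_def, hba, hca, hda, hcb, hdb, hdc, hab, hac, had, hbc, hbd, hcd]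
  have m10 : permOp 2 n (Equiv.swap a d * (c3 a c d * (c3 a b c * σ))) ∈ Submodule.span ℂ
      {f : Module.End ℂ ((Fin n → Fin 2) → ℂ) | ∃ τ', g τ' < g σ ∧ f = permOp 2 n τ'} := by
    refine mem1 _ (g_lt ha (houtgen _ ?_) a sa (Or.inl ?_))
    · intro x n1 n2 n3 n4
      simp [Equiv.Perm.mul_apply, c3_apply hab hac hbc, c3_apply hac had hcd, c3_apply hac hab hcb, c3_apply had hac hdc, c3_apply hab had hbd, Equiv.swap_apply_def, n1, n2, n3, n4]
    · simp [Equiv.Perm.mul_apply, c3_apply hab hac hbc, c3_apply hac had hcd, c3_apply hac hab hcb, c3_apply had hac hdc, c3_apply hab had hbd, ← hb, ← hc, ← hd, Equiv.swap_apply_def, hba, hca, hda, hcb, hdb, hdc, hab, hac, had, hbc, hbd, hcd]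
  have m11 : permOp 2 n (Equiv.swap a b * (c3 a c d * (c3 a b c * σ))) ∈ Submodule.span ℂ
      {f : Module.End ℂ ((Fin n → Fin 2) → ℂ) | ∃ τ', g τ' < g σ ∧ f = permOp 2 n τ'} := by
    refine mem1 _ (g_lt ha (houtgen _ ?_) b sb (Or.inr (Or.inl ?_)))
    · intro x n1 n2 n3 n4
      simp [Equiv.Perm.mul_apply, c3_apply hab hac hbc, c3_apply hac had hcd, c3_apply hac hab hcb, c3_apply had hac hdc, c3_apply hab had hbd, Equiv.swap_apply_def, n1, n2, n3, n4]
    · simp [Equiv.Perm.mul_apply, c3_apply hab hac hbc, c3_apply hac had hcd, c3_apply hac hab hcb, c3_apply had hac hdc, c3_apply hab had hbd, ← hb, ← hc, ← hd, Equiv.swap_apply_def, hba, hca, hda, hcb, hdb, hdc, hab, hac, had, hbc, hbd, hcd]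
  have m12 : permOp 2 n (Equiv.swap d b * (c3 a c d * (c3 a b c * σ))) ∈ Submodule.span ℂ
      {f : Module.End ℂ ((Fin n → Fin 2) → ℂ) | ∃ τ', g τ' < g σ ∧ f = permOp 2 n τ'} := by
    refine mem1 _ (g_lt ha (houtgen _ ?_) a sa (Or.inr (Or.inr ?_)))
    · intro x n1 n2 n3 n4
      simp [Equiv.Perm.mul_apply, c3_apply hab hac hbc, c3_apply hac had hcd, c3_apply hac hab hcb, c3_apply had hac hdc, c3_apply hab had hbd, Equiv.swap_apply_def, n1, n2, n3, n4]
    · simp [Equiv.Perm.mul_apply, c3_apply hab hac hbc, c3_apply hac had hcd, c3_apply hac hab hcb, c3_apply had hac hdc, c3_apply hab had hbd, ← hb, ← hc, ← hd, Equiv.swap_apply_def, hba, hca, hda, hcb, hdb, hdc, hab, hac, had, hbc, hbd, hcd]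
  have h2smul : permOp 2 n σ = (2:ℂ)⁻¹ • (permOp 2 n σ + permOp 2 n σ) := by
    rw [← two_smul ℂ, smul_smul]
    norm_num
  rw [h2smul, key]
  refine Submodule.smul_mem _ _ ?_
  refine Submodule.sub_mem _ (Submodule.add_mem _ (Submodule.sub_mem _
    (Submodule.add_mem _ (Submodule.sub_mem _ ?_ ?_) ?_) m1) m2) m3
  · exact Submodule.add_mem _ (Submodule.add_mem _ m4 m5) m6
  · exact Submodule.add_mem _ (Submodule.add_mem _ m7 m8) m9
  · exact Submodule.add_mem _ (Submodule.add_mem _ m10 m11) m12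

lemma main_aux : ∀ (m : ℕ) (σ : Equiv.Perm (Fin n)), g σ ≤ m →
    permOp 2 n σ ∈ Submodule.span ℂ
      {f : Module.End ℂ ((Fin n → Fin 2) → ℂ) |
        ∃ τ : Equiv.Perm (Fin n), (∀ i ∈ τ.cycleType, i ≤ 3) ∧ f = permOp 2 n τ} := by
  intro m
  induction m with
  | zero =>
    intro σ hσ
    have hnb : ∀ x, ¬ bad σ x := by
      intro x hx
      have hmem : x ∈ Finset.univ.filter (bad σ) :=
        Finset.mem_filter.mpr ⟨Finset.mem_univ x, hx⟩
      have := Finset.card_pos.mpr ⟨x, hmem⟩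
      unfold g at hσ
      omega
    exact Submodule.subset_span ⟨σ, short_of_no_bad hnb, rfl⟩
  | succ m ih =>
    intro σ hσ
    by_cases hbad : ∃ x, bad σ x
    · obtain ⟨x, hx⟩ := hbad
      refine Submodule.span_le.mpr ?_ (mem_of_bad hx)
      rintro f ⟨τ, hτ, rfl⟩
      exact ih τ (by omega)
    · push_neg at hbad
      exact Submodule.subset_span ⟨σ, short_of_no_bad hbad, rfl⟩

end SwapAux

/-- For every `n`, the swap algebra `Σₙ` (`dim V = 2`), i.e. the span of all permutation
operators on `V^⊗n`, is spanned by the operators of permutations all of whose cycles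
have length at most 3. -/
theorem swapAlgebra_spanned_by_short_cycles (n : ℕ) :
    Submodule.span ℂ (Set.range (permOp 2 n)) =
      Submodule.span ℂ
        {f : Module.End ℂ ((Fin n → Fin 2) → ℂ) |
          ∃ τ : Equiv.Perm (Fin n), (∀ i ∈ τ.cycleType, i ≤ 3) ∧ f = permOp 2 n τ} := by
  apply le_antisymm
  · rw [Submodule.span_le]
    rintro f ⟨σ, rfl⟩
    exact SwapAux.main_aux (SwapAux.g σ) σ le_rfl
  · apply Submodule.span_mono
    rintro f ⟨τ, -, rfl⟩
    exact ⟨τ, rfl⟩
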